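/- Let ⋆ be a semistar operation on an integral domain D and I a nonzero fractional ideal. Then I is ⋆_f-invertible if and only if I and I^{-1} are both ⋆_f-finite and I is ⋆-invertible. -/

import Mathlib

open Submodule

structure SemistarOperation (R K : Type*) [CommRing R] [Field K] [Algebra R K] where
  star : Submodule R K → Submodule R K
  star_smul : ∀ (x : K), x ≠ 0 → ∀ E : Submodule R K, E ≠ ⊥ →
    star (E.map (LinearMap.mul R K x)) = (star E).map (LinearMap.mul R K x)
  star_mono : ∀ E F : Submodule R K, E ≠ ⊥ → F ≠ ⊥ → E ≤ F → star E ≤ star F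
  le_star : ∀ E : Submodule R K, E ≠ ⊥ → E ≤ star E
  star_idem : ∀ E : Submodule R K, E ≠ ⊥ → star (star E) = star E

variable {R K : Type*} [CommRing R] [Field K] [Algebra R K]

def starF (s : SemistarOperation R K) (E : Submodule R K) : Submodule R K :=
  ⨆ (F : Submodule R K) (_ : F ≤ E ∧ F ≠ ⊥ ∧ F.FG), s.star F

def IsFiniteTypeOp (s : SemistarOperation R K) : Prop :=
  ∀ E : Submodule R K, E ≠ ⊥ → s.star E = starF s E

def IsStableOp (s : SemistarOperation R K) : Prop :=
  ∀ E F : Submodule R K, E ≠ ⊥ → F ≠ ⊥ → E ⊓ F ≠ ⊥ → s.star (E ⊓ F) = s.star E ⊓ s.star F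

def IsFracIdeal (I : Submodule R K) : Prop :=
  I ≠ ⊥ ∧ ∃ d : R, d ≠ 0 ∧ ∀ x ∈ I, algebraMap R K d * x ∈ (1 : Submodule R K)

def IsStarInv (s : SemistarOperation R K) (I : Submodule R K) : Prop :=
  s.star (I * ((1 : Submodule R K) / I)) = s.star 1

def IsQuasiStarInv (s : SemistarOperation R K) (I : Submodule R K) : Prop :=
  s.star (I * (s.star 1 / I)) = s.star 1

def QuasiStarIdeal (f : Submodule R K → Submodule R K) (I : Ideal R) : Prop :=
  I ≠ ⊥ ∧ (f (Submodule.map (Algebra.linearMap R K) I)).comap (Algebra.linearMap R K) = I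

def QuasiStarMax (f : Submodule R K → Submodule R K) (I : Ideal R) : Prop :=
  QuasiStarIdeal f I ∧ I ≠ ⊤ ∧ ∀ J : Ideal R, QuasiStarIdeal f J → J ≠ ⊤ → I ≤ J → I = J

def HStarDomain (s : SemistarOperation R K) : Prop :=
  ∀ I : Ideal R, I ≠ ⊥ → s.star (Submodule.map (Algebra.linearMap R K) I) = s.star 1 →
    ∃ J : Ideal R, J ≠ ⊥ ∧ J.FG ∧ J ≤ I ∧ s.star (Submodule.map (Algebra.linearMap R K) J) = s.star 1

def locAt (Q : Ideal R) : Submodule R K :=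
  span R {x : K | ∃ s : R, s ∉ Q ∧ x * algebraMap R K s = 1}

def starTilde (s : SemistarOperation R K) (E : Submodule R K) : Submodule R K :=
  ⨅ (Q : Ideal R) (_ : QuasiStarMax (starF s) Q), E * locAt Q

variable {D K : Type*} [CommRing D] [IsDomain D] [Field K] [Algebra D K] [IsFractionRing D K]

set_option linter.unusedSectionVars false

section SSHelpers

variable {D K : Type*} [CommRing D] [IsDomain D] [Field K] [Algebra D K] [IsFractionRing D K]
variable (s : SemistarOperation D K)

lemma ssh_mul_ne_bot {A B : Submodule D K} (hA : A ≠ ⊥) (hB : B ≠ ⊥) : A * B ≠ ⊥ := by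
  rw [Submodule.ne_bot_iff] at hA hB ⊢
  obtain ⟨a, ha, ha0⟩ := hA
  obtain ⟨b, hb, hb0⟩ := hB
  exact ⟨a * b, Submodule.mul_mem_mul ha hb, mul_ne_zero ha0 hb0⟩

lemma ssh_star_ne_bot {A : Submodule D K} (hA : A ≠ ⊥) : s.star A ≠ ⊥ :=
  fun h => hA (le_bot_iff.mp (h ▸ s.le_star A hA))

lemma ssh_span_ne_bot {x : K} (hx : x ≠ 0) : span D {x} ≠ ⊥ := by
  simpa [Submodule.span_singleton_eq_bot] using hx

lemma ssh_starF_mono {E F : Submodule D K} (h : E ≤ F) : starF s E ≤ starF s F :=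
  iSup₂_le fun G hG => le_iSup₂_of_le G ⟨hG.1.trans h, hG.2⟩ le_rfl

lemma ssh_le_starF (E : Submodule D K) : E ≤ starF s E := by
  intro x hx
  rcases eq_or_ne x 0 with rfl | hx0
  · exact zero_mem _
  · have h1 : span D {x} ≤ E := span_le.mpr (Set.singleton_subset_iff.mpr hx)
    have h2 : x ∈ s.star (span D {x}) :=
      s.le_star _ (ssh_span_ne_bot hx0) (mem_span_singleton_self x)
    have h3 : s.star (span D {x}) ≤ starF s E :=
      le_iSup₂_of_le (span D {x}) ⟨h1, ssh_span_ne_bot hx0, fg_span_singleton x⟩ le_rfl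
    exact h3 h2

lemma ssh_starF_le_star {E : Submodule D K} (hE : E ≠ ⊥) : starF s E ≤ s.star E :=
  iSup₂_le fun G hG => s.star_mono G E hG.2.1 hE hG.1

lemma ssh_starF_ne_bot {E : Submodule D K} (hE : E ≠ ⊥) : starF s E ≠ ⊥ :=
  fun h => hE (le_bot_iff.mp (h ▸ ssh_le_starF s E))

lemma ssh_starF_fg {F : Submodule D K} (hb : F ≠ ⊥) (hfg : F.FG) : starF s F = s.star F :=
  le_antisymm (ssh_starF_le_star s hb) (le_iSup₂_of_le F ⟨le_rfl, hb, hfg⟩ le_rfl)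

lemma ssh_mem_starF {E : Submodule D K} (hE : E ≠ ⊥) {x : K} (hx : x ∈ starF s E) :
    ∃ F : Submodule D K, F ≤ E ∧ F ≠ ⊥ ∧ F.FG ∧ x ∈ s.star F := by
  obtain ⟨e, he, he0⟩ := (Submodule.ne_bot_iff E).mp hE
  have hne : Nonempty {F : Submodule D K // F ≤ E ∧ F ≠ ⊥ ∧ F.FG} :=
    ⟨⟨span D {e}, span_le.mpr (Set.singleton_subset_iff.mpr he), ssh_span_ne_bot he0,
      fg_span_singleton e⟩⟩
  have hdir : Directed (· ≤ ·)
      (fun F : {F : Submodule D K // F ≤ E ∧ F ≠ ⊥ ∧ F.FG} => s.star F.1) := by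
    rintro ⟨a, haE, hab, hafg⟩ ⟨b, hbE, hbb, hbfg⟩
    have hsb : a ⊔ b ≠ ⊥ := fun h => hab (le_bot_iff.mp (h ▸ le_sup_left))
    exact ⟨⟨a ⊔ b, sup_le haE hbE, hsb, hafg.sup hbfg⟩,
      s.star_mono a (a ⊔ b) hab hsb le_sup_left,
      s.star_mono b (a ⊔ b) hbb hsb le_sup_right⟩
  rw [starF, iSup_subtype'] at hx
  obtain ⟨F, hF⟩ := (Submodule.mem_iSup_of_directed _ hdir).mp hx
  exact ⟨F.1, F.2.1, F.2.2.1, F.2.2.2, hF⟩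

lemma ssh_star_mul_mem {A B : Submodule D K} (hA : A ≠ ⊥) (hB : B ≠ ⊥) {a b : K}
    (ha : a ∈ s.star A) (hb : b ∈ B) : a * b ∈ s.star (A * B) := by
  rcases eq_or_ne b 0 with rfl | hb0
  · simpa using zero_mem (s.star (A * B))
  · have hmap : A.map (LinearMap.mul D K b) ≤ A * B := by
      rintro _ ⟨x, hx, rfl⟩
      simpa [LinearMap.mul_apply', mul_comm] using Submodule.mul_mem_mul hx hb
    have hmb : A.map (LinearMap.mul D K b) ≠ ⊥ := by
      obtain ⟨x, hx, hx0⟩ := (Submodule.ne_bot_iff A).mp hA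
      rw [Submodule.ne_bot_iff]
      exact ⟨b * x, ⟨x, hx, by simp [LinearMap.mul_apply']⟩, mul_ne_zero hb0 hx0⟩
    have hmem : b * a ∈ s.star (A.map (LinearMap.mul D K b)) := by
      rw [s.star_smul b hb0 A hA]
      exact ⟨a, ha, by simp [LinearMap.mul_apply']⟩
    have h4 : s.star (A.map (LinearMap.mul D K b)) ≤ s.star (A * B) :=
      s.star_mono _ _ hmb (ssh_mul_ne_bot hA hB) hmap
    rw [mul_comm a b]
    exact h4 hmem

lemma ssh_mul_star_le {A B : Submodule D K} (hA : A ≠ ⊥) (hB : B ≠ ⊥) :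
    s.star A * B ≤ s.star (A * B) :=
  Submodule.mul_le.mpr fun _ ha _ hb => ssh_star_mul_mem s hA hB ha hb

lemma ssh_star_le_star_of_le_star {G A : Submodule D K} (hG : G ≠ ⊥) (hA : A ≠ ⊥)
    (h : G ≤ s.star A) : s.star G ≤ s.star A := by
  have := s.star_mono G (s.star A) hG (ssh_star_ne_bot s hA) h
  rwa [s.star_idem A hA] at this

lemma ssh_star_mul_star_le {A B : Submodule D K} (hA : A ≠ ⊥) (hB : B ≠ ⊥) :
    s.star A * s.star B ≤ s.star (A * B) := by
  have h1 : s.star A * s.star B ≤ s.star (A * s.star B) :=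
    ssh_mul_star_le s hA (ssh_star_ne_bot s hB)
  have h2 : A * s.star B ≤ s.star (A * B) := by
    rw [mul_comm A, mul_comm A]
    exact ssh_mul_star_le s hB hA
  exact h1.trans (ssh_star_le_star_of_le_star s
    (ssh_mul_ne_bot hA (ssh_star_ne_bot s hB)) (ssh_mul_ne_bot hA hB) h2)

lemma ssh_starF_le_star_of {E A : Submodule D K} (hA : A ≠ ⊥) (h : E ≤ s.star A) :
    starF s E ≤ s.star A :=
  iSup₂_le fun G hG => ssh_star_le_star_of_le_star s hG.2.1 hA (hG.1.trans h)

lemma ssh_starF_eq_of {A E : Submodule D K} (hAb : A ≠ ⊥) (hAfg : A.FG) (hAE : A ≤ E)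
    (hE : E ≤ s.star A) : starF s A = starF s E := by
  refine le_antisymm (ssh_starF_mono s hAE) ?_
  rw [ssh_starF_fg s hAb hAfg]
  exact ssh_starF_le_star_of s hAb hE

lemma ssh_star_starF {E : Submodule D K} (hE : E ≠ ⊥) : s.star (starF s E) = s.star E := by
  refine le_antisymm ?_ (s.star_mono E (starF s E) hE (ssh_starF_ne_bot s hE) (ssh_le_starF s E))
  have := s.star_mono (starF s E) (s.star E) (ssh_starF_ne_bot s hE) (ssh_star_ne_bot s hE)
    (ssh_starF_le_star s hE)
  rwa [s.star_idem E hE] at this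

lemma ssh_map_mul_eq (x : K) (N : Submodule D K) :
    N.map (LinearMap.mul D K x) = span D {x} * N := by
  apply le_antisymm
  · rintro _ ⟨n, hn, rfl⟩
    simpa [LinearMap.mul_apply'] using Submodule.mul_mem_mul (mem_span_singleton_self x) hn
  · rw [Submodule.mul_le]
    intro m hm n hn
    obtain ⟨c, rfl⟩ := mem_span_singleton.mp hm
    have : x * n ∈ N.map (LinearMap.mul D K x) := ⟨n, hn, by simp [LinearMap.mul_apply']⟩
    simpa [smul_mul_assoc] using Submodule.smul_mem _ c this

lemma ssh_exists_fg_sub_mul {A B : Submodule D K} {x : K} (hx : x ∈ A * B) :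
    ∃ J H : Submodule D K, J ≤ A ∧ H ≤ B ∧ J.FG ∧ H.FG ∧ x ∈ J * H := by
  refine Submodule.mul_induction_on hx ?_ ?_
  · intro m hm n hn
    exact ⟨span D {m}, span D {n}, span_le.mpr (Set.singleton_subset_iff.mpr hm),
      span_le.mpr (Set.singleton_subset_iff.mpr hn), fg_span_singleton m, fg_span_singleton n,
      Submodule.mul_mem_mul (mem_span_singleton_self m) (mem_span_singleton_self n)⟩
  · rintro x y ⟨J1, H1, hJ1, hH1, hJ1fg, hH1fg, hx1⟩ ⟨J2, H2, hJ2, hH2, hJ2fg, hH2fg, hy2⟩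
    exact ⟨J1 ⊔ J2, H1 ⊔ H2, sup_le hJ1 hJ2, sup_le hH1 hH2, hJ1fg.sup hJ2fg, hH1fg.sup hH2fg,
      add_mem ((mul_le_mul' le_sup_left le_sup_left : J1 * H1 ≤ (J1 ⊔ J2) * (H1 ⊔ H2)) hx1)
        ((mul_le_mul' le_sup_right le_sup_right : J2 * H2 ≤ (J1 ⊔ J2) * (H1 ⊔ H2)) hy2)⟩

lemma ssh_exists_fg_pair {A B F : Submodule D K} (hF : F.FG) (hle : F ≤ A * B) :
    ∃ J H : Submodule D K, J ≤ A ∧ H ≤ B ∧ J.FG ∧ H.FG ∧ F ≤ J * H := by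
  obtain ⟨T, rfl⟩ := hF
  have key : ∀ T : Finset K, (↑T : Set K) ⊆ ↑(A * B) →
      ∃ J H : Submodule D K, J ≤ A ∧ H ≤ B ∧ J.FG ∧ H.FG ∧ (↑T : Set K) ⊆ ↑(J * H) := by
    classical
    intro T
    induction T using Finset.induction_on with
    | empty => exact fun _ => ⟨⊥, ⊥, bot_le, bot_le, fg_bot, fg_bot, by simp⟩
    | @insert a T ha ih =>
      intro hsub
      rw [Finset.coe_insert, Set.insert_subset_iff] at hsub
      obtain ⟨J1, H1, hJ1, hH1, hJ1fg, hH1fg, hsub1⟩ := ih hsub.2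
      obtain ⟨J2, H2, hJ2, hH2, hJ2fg, hH2fg, ha2⟩ := ssh_exists_fg_sub_mul hsub.1
      refine ⟨J1 ⊔ J2, H1 ⊔ H2, sup_le hJ1 hJ2, sup_le hH1 hH2, hJ1fg.sup hJ2fg,
        hH1fg.sup hH2fg, ?_⟩
      rw [Finset.coe_insert, Set.insert_subset_iff]
      exact ⟨(mul_le_mul' le_sup_right le_sup_right : J2 * H2 ≤ (J1 ⊔ J2) * (H1 ⊔ H2)) ha2,
        hsub1.trans (SetLike.coe_subset_coe.mpr (mul_le_mul' le_sup_left le_sup_left))⟩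
  obtain ⟨J, H, h1, h2, h3, h4, h5⟩ := key T (fun t ht => hle (subset_span ht))
  exact ⟨J, H, h1, h2, h3, h4, span_le.mpr h5⟩

lemma ssh_finset_sub_star {E : Submodule D K} (hE : E ≠ ⊥) (T : Finset K)
    (hT : (↑T : Set K) ⊆ ↑(starF s E)) :
    ∃ G : Submodule D K, G ≤ E ∧ G ≠ ⊥ ∧ G.FG ∧ (↑T : Set K) ⊆ ↑(s.star G) := by
  classical
  obtain ⟨e, he, he0⟩ := (Submodule.ne_bot_iff E).mp hE
  induction T using Finset.induction_on with
  | empty =>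
    exact ⟨span D {e}, span_le.mpr (Set.singleton_subset_iff.mpr he), ssh_span_ne_bot he0,
      fg_span_singleton e, by simp⟩
  | @insert a T ha ih =>
    rw [Finset.coe_insert, Set.insert_subset_iff] at hT
    obtain ⟨G1, hG1, hG1b, hG1fg, hsub1⟩ := ih hT.2
    obtain ⟨G2, hG2, hG2b, hG2fg, ha2⟩ := ssh_mem_starF s hE hT.1
    have hsb : G1 ⊔ G2 ≠ ⊥ := fun h => hG1b (le_bot_iff.mp (h ▸ le_sup_left))
    refine ⟨G1 ⊔ G2, sup_le hG1 hG2, hsb, hG1fg.sup hG2fg, ?_⟩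
    rw [Finset.coe_insert, Set.insert_subset_iff]
    exact ⟨s.star_mono G2 (G1 ⊔ G2) hG2b hsb le_sup_right ha2,
      hsub1.trans (s.star_mono G1 (G1 ⊔ G2) hG1b hsb le_sup_left)⟩

lemma ssh_fg_rep {E : Submodule D K} (hE : E ≠ ⊥)
    (h : ∃ J : Submodule D K, J ≠ ⊥ ∧ J.FG ∧ starF s J = starF s E) :
    ∃ J : Submodule D K, J ≤ E ∧ J ≠ ⊥ ∧ J.FG ∧ starF s J = starF s E := by
  obtain ⟨J, hJb, hJfg, hJeq⟩ := h
  obtain ⟨T, hT⟩ := hJfg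
  have hJle : J ≤ starF s E := by
    rw [← hJeq]; exact ssh_le_starF s J
  have hTsub : (↑T : Set K) ⊆ ↑(starF s E) := by
    intro t ht
    exact hJle (hT ▸ subset_span ht)
  obtain ⟨G, hGE, hGb, hGfg, hGstar⟩ := ssh_finset_sub_star s hE T hTsub
  have hJstar : J ≤ s.star G := by
    rw [← hT]; exact span_le.mpr hGstar
  refine ⟨G, hGE, hGb, hGfg, le_antisymm (ssh_starF_mono s hGE) ?_⟩
  calc starF s E = starF s J := hJeq.symm
    _ ≤ s.star G := ssh_starF_le_star_of s hGb hJstar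
    _ = starF s G := (ssh_starF_fg s hGb hGfg).symm

lemma ssh_mem_star_of {A B : Submodule D K} (hA : A ≠ ⊥) (hB : B ≠ ⊥)
    (h1 : (1 : K) ∈ s.star (A * B)) {x : K} (hx : span D {x} * B ≤ 1) : x ∈ s.star A := by
  rcases eq_or_ne x 0 with rfl | hx0
  · exact zero_mem _
  · have hAB : A * B ≠ ⊥ := ssh_mul_ne_bot hA hB
    have e1 : (A * B).map (LinearMap.mul D K x) = A * (span D {x} * B) := by
      rw [ssh_map_mul_eq, ← mul_assoc, mul_comm (span D {x}) A, mul_assoc]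
    have hle : (A * B).map (LinearMap.mul D K x) ≤ A := by
      rw [e1]
      calc A * (span D {x} * B) ≤ A * 1 := mul_le_mul' le_rfl hx
        _ = A := mul_one A
    have hmb : (A * B).map (LinearMap.mul D K x) ≠ ⊥ := by
      rw [e1]
      exact ssh_mul_ne_bot hA (ssh_mul_ne_bot (ssh_span_ne_bot hx0) hB)
    have hxm : x ∈ s.star ((A * B).map (LinearMap.mul D K x)) := by
      rw [s.star_smul x hx0 (A * B) hAB]
      exact ⟨1, h1, by simp [LinearMap.mul_apply']⟩
    exact s.star_mono _ A hmb hA hle hxm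

lemma ssh_one_ne_bot : (1 : Submodule D K) ≠ ⊥ :=
  (Submodule.ne_bot_iff _).mpr ⟨1, one_le.mp le_rfl, one_ne_zero⟩

end SSHelpers

theorem stmt8 (s : SemistarOperation D K) (I : Submodule D K) (hI : IsFracIdeal I) :
    starF s (I * ((1 : Submodule D K) / I)) = starF s 1 ↔
    ((∃ J : Submodule D K, J ≠ ⊥ ∧ J.FG ∧ starF s J = starF s I) ∧
     (∃ J : Submodule D K, J ≠ ⊥ ∧ J.FG ∧ starF s J = starF s ((1 : Submodule D K) / I)) ∧
     IsStarInv s I) := by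
  obtain ⟨hIbot, d, hd0, hdmem⟩ := hI
  have hdK : (algebraMap D K d) ≠ 0 :=
    (map_ne_zero_iff _ (IsFractionRing.injective D K)).mpr hd0
  have hdIv : algebraMap D K d ∈ (1 : Submodule D K) / I :=
    (Submodule.mem_div_iff_forall_mul_mem).mpr fun y hy => hdmem y hy
  have hIv : (1 : Submodule D K) / I ≠ ⊥ :=
    (Submodule.ne_bot_iff _).mpr ⟨algebraMap D K d, hdIv, hdK⟩
  have hM : I * ((1 : Submodule D K) / I) ≠ ⊥ := ssh_mul_ne_bot hIbot hIv
  have hMle : I * ((1 : Submodule D K) / I) ≤ 1 := Submodule.mul_one_div_le_one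
  constructor
  · intro h
    obtain ⟨x₀, hx₀I, hx₀⟩ := (Submodule.ne_bot_iff I).mp hIbot
    have h1M : (1 : K) ∈ starF s (I * ((1 : Submodule D K) / I)) := by
      rw [h]
      exact ssh_le_starF s 1 (one_le.mp le_rfl)
    obtain ⟨F, hFle, hFbot, hFfg, hF1⟩ := ssh_mem_starF s hM h1M
    obtain ⟨J, H, hJle, hHle, hJfg, hHfg, hFJH⟩ := ssh_exists_fg_pair hFfg hFle
    set J' := J ⊔ span D {x₀} with hJ'
    set H' := H ⊔ span D {algebraMap D K d} with hH'
    have hJ'le : J' ≤ I := sup_le hJle (span_le.mpr (Set.singleton_subset_iff.mpr hx₀I))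
    have hH'le : H' ≤ (1 : Submodule D K) / I :=
      sup_le hHle (span_le.mpr (Set.singleton_subset_iff.mpr hdIv))
    have hJ'b : J' ≠ ⊥ := fun hb => ssh_span_ne_bot (D := D) hx₀ (le_bot_iff.mp (hb ▸ le_sup_right))
    have hH'b : H' ≠ ⊥ := fun hb => ssh_span_ne_bot (D := D) hdK (le_bot_iff.mp (hb ▸ le_sup_right))
    have hJ'fg : J'.FG := hJfg.sup (fg_span_singleton x₀)
    have hH'fg : H'.FG := hHfg.sup (fg_span_singleton _)
    have hJH'b : J' * H' ≠ ⊥ := ssh_mul_ne_bot hJ'b hH'b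
    have h1' : (1 : K) ∈ s.star (J' * H') := by
      have hsub : F ≤ J' * H' := hFJH.trans (mul_le_mul' le_sup_left le_sup_left)
      exact s.star_mono F (J' * H') hFbot hJH'b hsub hF1
    have hIstar : I ≤ s.star J' := by
      intro x hx
      refine ssh_mem_star_of s hJ'b hH'b h1' ?_
      calc span D {x} * H' ≤ I * ((1 : Submodule D K) / I) :=
            mul_le_mul' (span_le.mpr (Set.singleton_subset_iff.mpr hx)) hH'le
        _ ≤ 1 := hMle
    have hIvstar : (1 : Submodule D K) / I ≤ s.star H' := by
      intro y hy
      have h1'' : (1 : K) ∈ s.star (H' * J') := by rwa [mul_comm H' J']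
      refine ssh_mem_star_of s hH'b hJ'b h1'' ?_
      calc span D {y} * J' ≤ ((1 : Submodule D K) / I) * I :=
            mul_le_mul' (span_le.mpr (Set.singleton_subset_iff.mpr hy)) hJ'le
        _ = I * ((1 : Submodule D K) / I) := mul_comm _ _
        _ ≤ 1 := hMle
    refine ⟨⟨J', hJ'b, hJ'fg, ssh_starF_eq_of s hJ'b hJ'fg hJ'le hIstar⟩,
      ⟨H', hH'b, hH'fg, ssh_starF_eq_of s hH'b hH'fg hH'le hIvstar⟩, ?_⟩
    calc s.star (I * ((1 : Submodule D K) / I))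
        = s.star (starF s (I * ((1 : Submodule D K) / I))) := (ssh_star_starF s hM).symm
      _ = s.star (starF s 1) := by rw [h]
      _ = s.star 1 := ssh_star_starF s ssh_one_ne_bot
  · rintro ⟨hJex, hHex, hinv⟩
    obtain ⟨J, hJle, hJb, hJfg, hJeq⟩ := ssh_fg_rep s hIbot hJex
    obtain ⟨H, hHle, hHb, hHfg, hHeq⟩ := ssh_fg_rep s hIv hHex
    have hJHb : J * H ≠ ⊥ := ssh_mul_ne_bot hJb hHb
    have hIstar : I ≤ s.star J := by
      have : I ≤ starF s J := by rw [hJeq]; exact ssh_le_starF s I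
      rwa [ssh_starF_fg s hJb hJfg] at this
    have hIvstar : (1 : Submodule D K) / I ≤ s.star H := by
      have : (1 : Submodule D K) / I ≤ starF s H := by rw [hHeq]; exact ssh_le_starF s _
      rwa [ssh_starF_fg s hHb hHfg] at this
    have step : s.star (I * ((1 : Submodule D K) / I)) ≤ s.star (J * H) := by
      refine ssh_star_le_star_of_le_star s hM hJHb ?_
      calc I * ((1 : Submodule D K) / I) ≤ s.star J * s.star H :=
            mul_le_mul' hIstar hIvstar
        _ ≤ s.star (J * H) := ssh_star_mul_star_le s hJb hHb
    refine le_antisymm (ssh_starF_mono s hMle) ?_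
    calc starF s 1 ≤ s.star 1 := ssh_starF_le_star s ssh_one_ne_bot
      _ = s.star (I * ((1 : Submodule D K) / I)) := hinv.symm
      _ ≤ s.star (J * H) := step
      _ = starF s (J * H) := (ssh_starF_fg s hJHb (hJfg.mul hHfg)).symm
      _ ≤ starF s (I * ((1 : Submodule D K) / I)) :=
          ssh_starF_mono s (mul_le_mul' hJle hHle)
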